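/- The q-Dyson constant term identity (Zeilberger–Bressoud theorem): for non-negative integers a_1,…,a_n, the constant term in x_1,…,x_n of ∏_{1 ≤ i < j ≤ n} (x_i/x_j; q)_{a_i} (q x_j/x_i; q)_{a_j} equals (q;q)_{a_1+⋯+a_n} / ((q;q)_{a_1} ⋯ (q;q)_{a_n}). -/

import Mathlib

open Finset MvPolynomial

/-- The indeterminate `q` in the field of rational functions `ℚ(q)`. -/
noncomputable def q : RatFunc ℚ := RatFunc.X

/-- `(q;q)_m = ∏_{l=1}^{m} (1 - q^l)`. -/
noncomputable def qFac (m : ℕ) : RatFunc ℚ :=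
  ∏ l ∈ Finset.range m, (1 - q ^ (l + 1))

/-- The q-Dyson product `∏_{i<j} (x_i/x_j;q)_{a_i} (q x_j/x_i;q)_{a_j}`, cleared of
denominators: each factor `(1 - q^l x_i/x_j)` is replaced by `(x_j - q^l x_i)`, so that
multiplying the q-Dyson Laurent polynomial by `∏_{i<j} x_j^{a_i} x_i^{a_j}` gives this
genuine polynomial. -/
noncomputable def dysonPoly (n : ℕ) (a : Fin n → ℕ) : MvPolynomial (Fin n) (RatFunc ℚ) :=
  ∏ p ∈ Finset.univ.filter (fun p : Fin n × Fin n => p.1 < p.2),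
    ((∏ l ∈ Finset.range (a p.1), (X p.2 - C (q ^ l) * X p.1)) *
     (∏ l ∈ Finset.range (a p.2), (X p.1 - C (q ^ (l + 1)) * X p.2)))

section Combinatorial


/-- Sum over `range n` of `f ∘ skip m` equals sum over `range (n+1) \ {m}`. -/
lemma sum_skip {M : Type*} [AddCommMonoid M] (f : ℕ → M) (m n : ℕ) (hm : m < n + 1) :
    ∑ i ∈ range n, f (if i < m then i else i + 1) = ∑ j ∈ (range (n+1)).erase m, f j := by
  apply Finset.sum_nbij' (fun i => if i < m then i else i + 1) (fun j => if j < m then j else j - 1)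
  · intro i hi
    simp only [mem_range] at hi
    simp only [mem_erase, mem_range]
    split <;> omega
  · intro j hj
    simp only [mem_erase, mem_range] at hj
    simp only [mem_range]
    split <;> omega
  · intro i hi
    simp only [mem_range] at hi
    split_ifs <;> omega
  · intro j hj
    simp only [mem_erase, mem_range] at hj
    split_ifs <;> omega
  · intro i hi
    rfl

lemma comb_lemma (n : ℕ) : ∀ (a t : ℕ → ℕ),
    (∀ i, i < n → t i + a i ≤ ∑ j ∈ range n, a j) →
    (∀ i j, i < j → j < n → (t i + a i ≤ t j ∨ t j + a j + 1 ≤ t i)) →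
    ∀ i, i < n → t i = ∑ j ∈ range i, a j := by
  induction n with
  | zero => intro a t _ _ i hi; omega
  | succ n IH =>
    intro a t H1 H2 i hi
    classical
    -- minimal index attaining the minimum of t on range (n+1)
    have hPex : ∃ k, k < n + 1 ∧ ∀ j, j < n + 1 → t k ≤ t j := by
      obtain ⟨m, hm, hmin⟩ := Finset.exists_min_image (range (n+1)) t ⟨0, by simp⟩
      exact ⟨m, by simpa using hm, fun j hj => hmin j (by simpa using hj)⟩
    obtain ⟨hm, hmin⟩ := Nat.find_spec hPex
    set m := Nat.find hPex with hmdef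
    have hsmall : ∀ j, j < m → t m < t j := by
      intro j hj
      by_contra h
      push_neg at h
      have hje : ∀ k, k < n + 1 → t j ≤ t k := fun k hk => le_trans h (hmin k hk)
      exact Nat.find_min hPex (by omega) ⟨by omega, hje⟩
    have step2 : ∀ j, j < n + 1 → j ≠ m → t m + a m ≤ t j ∧ (j < m → t m + a m + 1 ≤ t j) := by
      intro j hj hjm
      rcases lt_or_gt_of_ne hjm with hlt | hgt
      · rcases H2 j m hlt hm with h | h
        · have := hsmall j hlt; omega
        · constructor <;> omega
      · rcases H2 m j hgt hj with h | h
        · constructor <;> omega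
        · have := hmin j hj; omega
    -- the skip function
    set sk : ℕ → ℕ := fun i => if i < m then i else i + 1 with hskdef
    have hsk_lt : ∀ i, i < n → sk i < n + 1 := by
      intro i hi; simp only [hskdef]; split <;> omega
    have hsk_ne : ∀ i, i < n → sk i ≠ m := by
      intro i hi; simp only [hskdef]; split <;> omega
    have hsk_mono : ∀ i j, i < j → sk i < sk j := by
      intro i j hij; simp only [hskdef]; split <;> split <;> omega
    have hsum' : (∑ j ∈ range n, a (sk j)) + a m = ∑ j ∈ range (n+1), a j := by
      rw [hskdef]
      rw [sum_skip a m n hm]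
      exact Finset.sum_erase_add _ _ (by simpa using hm)
    have hoffle : ∀ i, i < n → t m + a m ≤ t (sk i) :=
      fun i hi => (step2 _ (hsk_lt i hi) (hsk_ne i hi)).1
    have IH' : ∀ i, i < n → t (sk i) - (t m + a m) = ∑ j ∈ range i, a (sk j) := by
      have := IH (fun i => a (sk i)) (fun i => t (sk i) - (t m + a m)) ?_ ?_
      · intro i hi; exact this i hi
      · intro i hi
        have h1 := H1 (sk i) (hsk_lt i hi)
        have h2 := hoffle i hi
        omega
      · intro i j hij hj
        have h1 := H2 (sk i) (sk j) (hsk_mono i j hij) (hsk_lt j hj)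
        have h2 := hoffle j hj
        have h3 := hoffle i (lt_trans hij hj)
        omega
    -- m = 0
    have hm0 : m = 0 := by
      by_contra hmne
      have hmpos : 0 < m := Nat.pos_of_ne_zero hmne
      have hn1 : 0 < n := by omega
      have h0 := IH' 0 hn1
      have hsk0 : sk 0 = 0 := by simp only [hskdef]; rw [if_pos hmpos]
      rw [hsk0] at h0
      simp only [Finset.range_zero, Finset.sum_empty] at h0
      have ho : t m + a m ≤ t 0 := by
        have := hoffle 0 hn1; rwa [hsk0] at this
      have ht0 : t 0 = t m + a m := by omega
      rcases H2 0 m hmpos hm with h | h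
      · have := hsmall 0 hmpos; omega
      · omega
    have hsk1 : ∀ i, sk i = i + 1 := by
      intro i; simp only [hskdef, hm0, Nat.not_lt_zero, if_false]
    have tformula : ∀ k, k < n → t (k+1) = (∑ j ∈ range (k+1), a j) + t 0 := by
      intro k hk
      have h := IH' k hk
      rw [hsk1] at h
      have hsum : ∑ j ∈ range k, a (sk j) = ∑ j ∈ range k, a (j+1) := by
        apply Finset.sum_congr rfl; intro j _; rw [hsk1]
      rw [hsum] at h
      have hshift : ∑ j ∈ range k, a (j+1) + a 0 = ∑ j ∈ range (k+1), a j := by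
        rw [Finset.sum_range_succ']
      have ho := hoffle k hk
      rw [hsk1] at ho
      rw [hm0] at h ho
      omega
    have ht00 : t 0 = 0 := by
      rcases Nat.eq_zero_or_pos n with h0 | hpos
      · have h2 := H1 0 (by omega)
        rw [h0] at h2
        have h3 : ∑ j ∈ range (0+1), a j = a 0 := by simp
        omega
      · have hlast := tformula (n-1) (by omega)
        have hb := H1 n (by omega)
        have hn' : (n-1) + 1 = n := by omega
        rw [hn'] at hlast
        have : ∑ j ∈ range (n+1), a j = ∑ j ∈ range n, a j + a n := Finset.sum_range_succ a n
        omega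
    rcases Nat.eq_zero_or_pos i with h0 | hpos
    · rw [h0]; simpa using ht00
    · have := tformula (i-1) (by omega)
      have hi1 : (i-1) + 1 = i := by omega
      rw [hi1] at this
      omega

end Combinatorial

section Lagrange
open Polynomial

variable {F : Type*} [Field F] [DecidableEq F]

lemma leadingCoeff_basisDivisor {x y : F} (hxy : x ≠ y) :
    (Lagrange.basisDivisor x y).leadingCoeff = (x - y)⁻¹ := by
  unfold Lagrange.basisDivisor
  rw [leadingCoeff_mul, leadingCoeff_C, leadingCoeff_X_sub_C, mul_one]

lemma coeff_basis_card_sub_one (s : Finset F) {x : F} (hx : x ∈ s) :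
    (Lagrange.basis s id x).coeff (s.card - 1) = (∏ y ∈ s.erase x, (x - y))⁻¹ := by
  classical
  have hinj : Set.InjOn (id : F → F) s := Function.injective_id.injOn
  have hnd := Lagrange.natDegree_basis hinj hx
  rw [show s.card - 1 = (Lagrange.basis s id x).natDegree from hnd.symm]
  rw [← leadingCoeff]
  unfold Lagrange.basis
  rw [leadingCoeff_prod]
  rw [← Finset.prod_inv_distrib]
  apply Finset.prod_congr rfl
  intro y hy
  have hne : x ≠ y := fun h => (Finset.mem_erase.1 hy).1 h.symm
  exact leadingCoeff_basisDivisor hne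

/-- Key univariate fact: power sums against Lagrange weights pick out the top coefficient. -/
lemma lagrange_power_sum (s : Finset F) (e : ℕ) (he : e < s.card) :
    ∑ x ∈ s, x ^ e / (∏ y ∈ s.erase x, (x - y)) = if e + 1 = s.card then 1 else 0 := by
  classical
  have hinj : Set.InjOn (id : F → F) s := Function.injective_id.injOn
  have hdeg : ((Polynomial.X : F[X]) ^ e).degree < s.card := by
    rw [Polynomial.degree_X_pow]; exact_mod_cast he
  have hinterp := Lagrange.eq_interpolate hinj hdeg
  have := congrArg (fun p : F[X] => p.coeff (s.card - 1)) hinterp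
  rw [Polynomial.coeff_X_pow] at this
  rw [Lagrange.interpolate_apply, finset_sum_coeff] at this
  have hsum : ∀ x ∈ s, (Polynomial.C (((Polynomial.X : F[X]) ^ e).eval (id x)) * Lagrange.basis s id x).coeff (s.card - 1)
      = x ^ e / (∏ y ∈ s.erase x, (x - y)) := by
    intro x hx
    rw [Polynomial.coeff_C_mul, coeff_basis_card_sub_one s hx]
    simp [div_eq_mul_inv]
  rw [Finset.sum_congr rfl hsum] at this
  rw [← this]
  have hiff : s.card - 1 = e ↔ e + 1 = s.card := by omega
  by_cases h : e + 1 = s.card <;> simp [h, hiff]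

/-- The coefficient formula for a single monomial. -/
lemma monomial_coeff_formula {n : ℕ} (d : Fin n → ℕ) (A : Fin n → Finset F)
    (hcard : ∀ i, (A i).card = d i + 1) (m : Fin n →₀ ℕ) (hm : ∑ i, m i ≤ ∑ i, d i) (c : F) :
    MvPolynomial.coeff (Finsupp.equivFunOnFinite.symm d) (MvPolynomial.monomial m c) =
      ∑ z ∈ Fintype.piFinset A,
        MvPolynomial.eval z (MvPolynomial.monomial m c) / ∏ i, ∏ y ∈ (A i).erase (z i), (z i - y) := by
  classical
  have heval : ∀ z : Fin n → F, MvPolynomial.eval z (MvPolynomial.monomial m c)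
      = c * ∏ i, z i ^ m i := by
    intro z
    rw [MvPolynomial.eval_monomial]
    congr 1
    exact Finsupp.prod_fintype _ _ (fun i => pow_zero (z i))
  have hrhs : ∑ z ∈ Fintype.piFinset A,
      MvPolynomial.eval z (MvPolynomial.monomial m c) / ∏ i, ∏ y ∈ (A i).erase (z i), (z i - y)
      = c * ∏ i, ∑ x ∈ A i, x ^ m i / ∏ y ∈ (A i).erase x, (x - y) := by
    rw [Finset.prod_univ_sum, Finset.mul_sum]
    apply Finset.sum_congr rfl
    intro z hz
    rw [heval z, Finset.prod_div_distrib, mul_div_assoc]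
  rw [hrhs]
  have hcoeff : MvPolynomial.coeff (Finsupp.equivFunOnFinite.symm d) (MvPolynomial.monomial m c)
      = if m = Finsupp.equivFunOnFinite.symm d then c else 0 := MvPolynomial.coeff_monomial _ _ _
  by_cases hmd : ∀ i, m i = d i
  · have hme : m = Finsupp.equivFunOnFinite.symm d := by
      ext i
      simp [hmd i]
    rw [hcoeff, if_pos hme]
    have hprod : ∀ i : Fin n, ∑ x ∈ A i, x ^ m i / ∏ y ∈ (A i).erase x, (x - y) = 1 := by
      intro i
      rw [lagrange_power_sum (A i) (m i) (by rw [hcard i, hmd i]; omega)]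
      rw [if_pos (by rw [hcard i, hmd i])]
    rw [Finset.prod_congr rfl (fun i _ => hprod i), Finset.prod_const_one, mul_one]
  · push_neg at hmd
    obtain ⟨j0, hj0⟩ := hmd
    have hexlt : ∃ j, m j < d j := by
      by_contra h
      push_neg at h
      have hle : ∀ i ∈ (univ : Finset (Fin n)), d i ≤ m i := fun i _ => h i
      have hsume : ∑ i, d i = ∑ i, m i := le_antisymm (Finset.sum_le_sum hle) hm
      have := (Finset.sum_eq_sum_iff_of_le hle).1 hsume j0 (Finset.mem_univ j0)
      exact hj0 this.symm
    obtain ⟨j, hj⟩ := hexlt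
    have hme : m ≠ Finsupp.equivFunOnFinite.symm d := by
      intro h
      have : m j = d j := by rw [h]; simp
      omega
    rw [hcoeff, if_neg hme]
    have hzero : ∑ x ∈ A j, x ^ m j / ∏ y ∈ (A j).erase x, (x - y) = 0 := by
      rw [lagrange_power_sum (A j) (m j) (by rw [hcard j]; omega)]
      rw [if_neg (by rw [hcard j]; omega)]
    rw [Finset.prod_eq_zero (Finset.mem_univ j) hzero, mul_zero]

/-- Quantitative Combinatorial Nullstellensatz / multivariate Lagrange coefficient formula. -/
lemma coeff_eq_sum_grid {n : ℕ} (d : Fin n → ℕ) (A : Fin n → Finset F)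
    (hcard : ∀ i, (A i).card = d i + 1) (f : MvPolynomial (Fin n) F)
    (hdeg : f.totalDegree ≤ ∑ i, d i) :
    MvPolynomial.coeff (Finsupp.equivFunOnFinite.symm d) f =
      ∑ z ∈ Fintype.piFinset A,
        MvPolynomial.eval z f / ∏ i, ∏ y ∈ (A i).erase (z i), (z i - y) := by
  classical
  conv_lhs => rw [f.as_sum]
  rw [MvPolynomial.coeff_sum]
  have hr : ∀ z ∈ Fintype.piFinset A, MvPolynomial.eval z f / ∏ i, ∏ y ∈ (A i).erase (z i), (z i - y)
      = ∑ m ∈ f.support, MvPolynomial.eval z (MvPolynomial.monomial m (MvPolynomial.coeff m f))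
          / ∏ i, ∏ y ∈ (A i).erase (z i), (z i - y) := by
    intro z _
    rw [← Finset.sum_div]
    congr 1
    conv_lhs => rw [f.as_sum]
    rw [map_sum]
  rw [Finset.sum_congr rfl hr, Finset.sum_comm]
  apply Finset.sum_congr rfl
  intro m hmsup
  apply monomial_coeff_formula d A hcard m ?_ _
  have h1 : m.sum (fun _ e => e) = ∑ i, m i := Finsupp.sum_fintype _ _ (fun _ => rfl)
  have h2 : m.sum (fun _ e => e) ≤ f.totalDegree := MvPolynomial.le_totalDegree hmsup
  omega

end Lagrange
lemma q_pow_inj : Function.Injective (fun k : ℕ => q ^ k) := by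
  intro x y h
  simp only [q] at h
  rw [← RatFunc.algebraMap_X, ← map_pow, ← map_pow] at h
  have := RatFunc.algebraMap_injective ℚ h
  have := congrArg Polynomial.natDegree this
  simpa using this

lemma q_pow_sub_ne_zero {x y : ℕ} (h : x ≠ y) : q ^ x - q ^ y ≠ 0 := by
  refine sub_ne_zero.2 ?_
  exact fun he => h (q_pow_inj he)

lemma one_sub_q_pow_ne_zero (k : ℕ) : (1 : RatFunc ℚ) - q ^ (k + 1) ≠ 0 := by
  have := q_pow_sub_ne_zero (show (0:ℕ) ≠ k + 1 by omega)
  simpa using this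

lemma qFac_ne_zero (m : ℕ) : qFac m ≠ 0 :=
  Finset.prod_ne_zero_iff.2 fun l _ => one_sub_q_pow_ne_zero l

/-- partial q-Pochhammer block `∏_{u<m} (1 - q^{g+1+u}) = (q;q)_{g+m}/(q;q)_g`. -/
noncomputable def P (g m : ℕ) : RatFunc ℚ := ∏ u ∈ Finset.range m, (1 - q ^ (g + 1 + u))

lemma P_ne_zero (g m : ℕ) : P g m ≠ 0 :=
  Finset.prod_ne_zero_iff.2 fun l _ => by
    have := one_sub_q_pow_ne_zero (g + l)
    simpa [show g + l + 1 = g + 1 + l by omega] using this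

lemma qFac_eq_P (m : ℕ) : qFac m = P 0 m := by
  unfold qFac P
  exact Finset.prod_congr rfl fun l _ => by rw [show l + 1 = 0 + 1 + l by omega]

lemma qFac_add (x y : ℕ) : qFac (x + y) = qFac x * P x y := by
  unfold qFac P
  rw [Finset.prod_range_add]
  congr 1
  exact Finset.prod_congr rfl fun l _ => by rw [show x + l + 1 = x + 1 + l by omega]

lemma P_merge (x y z : ℕ) : P x y * P (x + y) z = P x (y + z) := by
  have h1 := qFac_add (x + y) z
  rw [qFac_add x y] at h1
  have h2 := qFac_add x (y + z)
  rw [show x + y + z = x + (y + z) from by omega] at h1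
  rw [h1] at h2
  have h3 : qFac x * P x (y + z) = qFac x * (P x y * P (x + y) z) := by linear_combination -h2
  exact (mul_left_cancel₀ (qFac_ne_zero x) h3).symm

lemma lemA (ci g m : ℕ) :
    ∏ l ∈ range m, (q ^ (ci + m + g) - q ^ (l + ci)) =
      (∏ l ∈ range m, -(q ^ (l + ci))) * P g m := by
  have hfac : ∀ l ∈ range m, q ^ (ci + m + g) - q ^ (l + ci)
      = -(q ^ (l + ci)) * (1 - q ^ (m + g - l)) := by
    intro l hl
    have hl' : l < m := mem_range.1 hl
    have : q ^ (l + ci) * q ^ (m + g - l) = q ^ (ci + m + g) := by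
      rw [← pow_add]
      congr 1
      omega
    linear_combination -this
  rw [Finset.prod_congr rfl hfac, Finset.prod_mul_distrib]
  congr 1
  unfold P
  rw [← Finset.prod_range_reflect]
  exact Finset.prod_congr rfl fun l hl => by
    rw [show m + g - (m - 1 - l) = g + 1 + l from by have := mem_range.1 hl; omega]

lemma lemB (ci h m : ℕ) :
    ∏ l ∈ range m, (q ^ ci - q ^ (l + 1 + (ci + h))) = (q ^ ci) ^ m * P h m := by
  have hfac : ∀ l ∈ range m, q ^ ci - q ^ (l + 1 + (ci + h))
      = q ^ ci * (1 - q ^ (h + 1 + l)) := by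
    intro l _
    have : q ^ ci * q ^ (h + 1 + l) = q ^ (l + 1 + (ci + h)) := by
      rw [← pow_add]; congr 1; omega
    linear_combination this
  rw [Finset.prod_congr rfl hfac, Finset.prod_mul_distrib, Finset.prod_const, Finset.card_range]
  rfl

lemma lemPhi (ci r : ℕ) :
    ∏ t ∈ (range (ci + r + 1)).erase ci, (q ^ ci - q ^ t) =
      ((∏ t ∈ range ci, -(q ^ t)) * P 0 ci) * ((q ^ ci) ^ r * P 0 r) := by
  have hsplit : (range (ci + r + 1)).erase ci = range ci ∪ Ico (ci + 1) (ci + r + 1) := by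
    ext t
    simp only [mem_erase, mem_range, mem_union, mem_Ico]
    omega
  have hdisj : Disjoint (range ci) (Ico (ci + 1) (ci + r + 1)) := by
    rw [Finset.disjoint_left]
    intro t ht ht'
    simp only [mem_range] at ht
    simp only [mem_Ico] at ht'
    omega
  rw [hsplit, Finset.prod_union hdisj]
  congr 1
  · -- lower part
    have hA := lemA 0 0 ci
    rw [show 0 + ci + 0 = ci from by omega] at hA
    calc ∏ t ∈ range ci, (q ^ ci - q ^ t)
        = ∏ l ∈ range ci, (q ^ ci - q ^ (l + 0)) :=
          Finset.prod_congr rfl fun l _ => by rw [Nat.add_zero]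
      _ = (∏ l ∈ range ci, -(q ^ (l + 0))) * P 0 ci := hA
      _ = (∏ t ∈ range ci, -(q ^ t)) * P 0 ci := by
          norm_num
  · rw [Finset.prod_Ico_eq_prod_range]
    have hr : ci + r + 1 - (ci + 1) = r := by omega
    rw [hr]
    have h2 : ∀ l ∈ range r, q ^ ci - q ^ (ci + 1 + l) = q ^ ci - q ^ (l + 1 + (ci + 0)) := by
      intro l _; rw [show ci + 1 + l = l + 1 + (ci + 0) from by omega]
    rw [Finset.prod_congr rfl h2, lemB]

lemma negprod (a : ℕ → ℕ) (n : ℕ) :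
    ∏ i ∈ range n, ∏ l ∈ range (a i), -(q ^ (l + ∑ j ∈ range i, a j)) =
      ∏ t ∈ range (∑ j ∈ range n, a j), -(q ^ t) := by
  induction n with
  | zero => simp
  | succ n IH =>
    rw [Finset.prod_range_succ, IH, Finset.sum_range_succ, Finset.prod_range_add]
    congr 1
    exact Finset.prod_congr rfl fun l _ => by
      rw [show (∑ j ∈ range n, a j) + l = l + ∑ j ∈ range n, a j from by omega]

lemma shift_prod {M : Type*} [CommMonoid M] (f : ℕ → M) (n : ℕ) :
    (∏ i ∈ range n, f i) * f n = f 0 * ∏ i ∈ range n, f (i + 1) := by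
  rw [← Finset.prod_range_succ, Finset.prod_range_succ']
  ring_nf
  rw [mul_comm]

/-- The per-index step identity. -/
lemma stepi_app (ci m r b N N' : ℕ) (hN : N = ci + m + r) (hN' : N' = N + b) :
    ((∏ l ∈ range m, (q ^ N - q ^ (l + ci))) *
     (∏ l ∈ range b, (q ^ ci - q ^ (l + 1 + N)))) *
    ((∏ t ∈ (range (N - m + 1)).erase ci, (q ^ ci - q ^ t)) * qFac (r + b))
    = (∏ t ∈ (range (N' - m + 1)).erase ci, (q ^ ci - q ^ t)) *
      ((∏ l ∈ range m, -(q ^ (l + ci))) * qFac (m + r + b)) := by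
  subst hN'; subst hN
  rw [show ci + m + r - m + 1 = ci + r + 1 from by omega,
      show ci + m + r + b - m + 1 = ci + (r + b) + 1 from by omega]
  rw [lemA ci r m]
  rw [show ci + m + r = ci + (m + r) from by omega]
  rw [lemB ci (m + r) b]
  rw [lemPhi ci r, lemPhi ci (r + b)]
  simp only [qFac_eq_P]
  rw [show m + r + b = r + m + b from by omega]
  rw [← P_merge 0 (r + m) b]
  rw [← P_merge 0 r m]
  rw [show m + r = r + m from by omega]
  simp only [Nat.zero_add]
  ring

/-- The main evaluation identity, `f(q^c) ⋅ ∏ (q;q)_{a_i} = (q;q)_σ ⋅ ∏ φ'_i(q^{c_i})`. -/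
lemma eval_identity (a : ℕ → ℕ) (n : ℕ) :
    (∏ j ∈ range n, ∏ i ∈ range j,
        ((∏ l ∈ range (a i), (q ^ (∑ k ∈ range j, a k) - q ^ (l + ∑ k ∈ range i, a k))) *
         (∏ l ∈ range (a j), (q ^ (∑ k ∈ range i, a k) - q ^ (l + 1 + ∑ k ∈ range j, a k))))) *
      ∏ i ∈ range n, qFac (a i)
    = qFac (∑ k ∈ range n, a k) *
      ∏ i ∈ range n, ∏ t ∈ (range ((∑ k ∈ range n, a k) - a i + 1)).erase (∑ k ∈ range i, a k),
        (q ^ (∑ k ∈ range i, a k) - q ^ t) := by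
  induction n with
  | zero => simp [qFac]
  | succ n IH =>
    have hσ1 : ∑ k ∈ range (n+1), a k = (∑ k ∈ range n, a k) + a n := Finset.sum_range_succ a n
    simp only [Finset.prod_range_succ, hσ1]
    -- names
    set σ := ∑ k ∈ range n, a k with hσdef
    set G := ∏ t ∈ range σ, -(q ^ t) with hGdef
    set T' := ∏ i ∈ range n, qFac ((∑ j ∈ Ico (i+1) n, a j) + a n) with hT'def
    set W := ∏ i ∈ range n,
        ((∏ l ∈ range (a i), (q ^ σ - q ^ (l + ∑ k ∈ range i, a k))) *
         (∏ l ∈ range (a n), (q ^ (∑ k ∈ range i, a k) - q ^ (l + 1 + σ)))) with hWdef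
    set Phi := ∏ i ∈ range n, ∏ t ∈ (range (σ - a i + 1)).erase (∑ k ∈ range i, a k),
        (q ^ (∑ k ∈ range i, a k) - q ^ t) with hPhidef
    set Phi' := ∏ i ∈ range n, ∏ t ∈ (range (σ + a n - a i + 1)).erase (∑ k ∈ range i, a k),
        (q ^ (∑ k ∈ range i, a k) - q ^ t) with hPhi'def
    -- the last φ factor
    have hPhiN : ∏ t ∈ (range (σ + a n - a n + 1)).erase σ, (q ^ σ - q ^ t) = G * P 0 σ := by
      rw [show σ + a n - a n + 1 = σ + 0 + 1 from by omega, lemPhi σ 0]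
      simp [P, hGdef]
    -- the key per-index identity, multiplied over i < n
    have KEY : ∏ i ∈ range n,
        (((∏ l ∈ range (a i), (q ^ σ - q ^ (l + ∑ k ∈ range i, a k))) *
          (∏ l ∈ range (a n), (q ^ (∑ k ∈ range i, a k) - q ^ (l + 1 + σ)))) *
         ((∏ t ∈ (range (σ - a i + 1)).erase (∑ k ∈ range i, a k),
             (q ^ (∑ k ∈ range i, a k) - q ^ t)) * qFac ((∑ j ∈ Ico (i+1) n, a j) + a n)))
        = ∏ i ∈ range n,
        ((∏ t ∈ (range (σ + a n - a i + 1)).erase (∑ k ∈ range i, a k),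
            (q ^ (∑ k ∈ range i, a k) - q ^ t)) *
         ((∏ l ∈ range (a i), -(q ^ (l + ∑ k ∈ range i, a k))) *
          qFac (a i + (∑ j ∈ Ico (i+1) n, a j) + a n))) := by
      apply Finset.prod_congr rfl
      intro i hi
      have hi' := Finset.mem_range.1 hi
      have hsplit : (∑ j ∈ range (i+1), a j) + ∑ j ∈ Ico (i+1) n, a j = ∑ j ∈ range n, a j :=
        Finset.sum_range_add_sum_Ico a (by omega)
      have hsucc : ∑ j ∈ range (i+1), a j = (∑ j ∈ range i, a j) + a i := Finset.sum_range_succ a i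
      have hN : σ = (∑ k ∈ range i, a k) + a i + (∑ j ∈ Ico (i+1) n, a j) := by
        rw [hσdef]; omega
      exact stepi_app (∑ k ∈ range i, a k) (a i) (∑ j ∈ Ico (i+1) n, a j) (a n) σ (σ + a n) hN rfl
    -- split the products in KEY
    simp only [Finset.prod_mul_distrib] at KEY
    -- telescoping
    have tel : (∏ i ∈ range n, qFac ((∑ j ∈ Ico i n, a j) + a n)) * qFac ((∑ j ∈ Ico n n, a j) + a n)
        = qFac ((∑ j ∈ Ico 0 n, a j) + a n) * T' :=
      shift_prod (fun i => qFac ((∑ j ∈ Ico i n, a j) + a n)) n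
    rw [Finset.Ico_self, Finset.sum_empty] at tel
    have hIco0 : ∑ j ∈ Ico 0 n, a j = σ := by rw [← Finset.range_eq_Ico]
    rw [hIco0] at tel
    norm_num at tel
    -- identify ∏ qFac (a i + ρ(i+1) + a n) with ∏ qFac (ρ i + a n)
    have hrho : ∏ i ∈ range n, qFac (a i + (∑ j ∈ Ico (i+1) n, a j) + a n)
        = ∏ i ∈ range n, qFac ((∑ j ∈ Ico i n, a j) + a n) := by
      apply Finset.prod_congr rfl
      intro i hi
      have hi' := Finset.mem_range.1 hi
      rw [Finset.sum_eq_sum_Ico_succ_bot hi' a]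
    rw [hrho] at KEY
    -- the sign product
    have hneg : ∏ i ∈ range n, ∏ l ∈ range (a i), -(q ^ (l + ∑ j ∈ range i, a j)) = G :=
      negprod a n
    rw [hneg] at KEY
    -- now put everything together, cancelling T'
    have hT'ne : T' ≠ 0 := by
      rw [hT'def]
      exact Finset.prod_ne_zero_iff.2 fun i _ => qFac_ne_zero _
    apply mul_right_cancel₀ hT'ne
    rw [hPhiN]
    calc (((∏ j ∈ range n, ∏ i ∈ range j,
            ((∏ l ∈ range (a i), (q ^ (∑ k ∈ range j, a k) - q ^ (l + ∑ k ∈ range i, a k))) *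
             (∏ l ∈ range (a j), (q ^ (∑ k ∈ range i, a k) - q ^ (l + 1 + ∑ k ∈ range j, a k))))) * W) *
          ((∏ i ∈ range n, qFac (a i)) * qFac (a n))) * T'
        = ((∏ j ∈ range n, ∏ i ∈ range j,
            ((∏ l ∈ range (a i), (q ^ (∑ k ∈ range j, a k) - q ^ (l + ∑ k ∈ range i, a k))) *
             (∏ l ∈ range (a j), (q ^ (∑ k ∈ range i, a k) - q ^ (l + 1 + ∑ k ∈ range j, a k))))) *
            (∏ i ∈ range n, qFac (a i))) * (W * qFac (a n) * T') := by ring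
      _ = (qFac σ * Phi) * (W * qFac (a n) * T') := by rw [IH]
      _ = qFac σ * qFac (a n) * (W * (Phi * T')) := by ring
      _ = qFac σ * qFac (a n) * (Phi' * (G * ∏ i ∈ range n, qFac ((∑ j ∈ Ico i n, a j) + a n))) := by
          rw [hWdef, hPhidef, hT'def, hPhi'def]
          simp only [Finset.prod_mul_distrib]
          linear_combination (qFac σ * qFac (a n)) * KEY
      _ = qFac σ * Phi' * G *
            ((∏ i ∈ range n, qFac ((∑ j ∈ Ico i n, a j) + a n)) * qFac (a n)) := by ring
      _ = qFac σ * Phi' * G * (qFac (σ + a n) * T') := by rw [tel]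
      _ = qFac (σ + a n) * (Phi' * (G * P 0 σ)) * T' := by rw [← qFac_eq_P]; ring

section pairs
variable {M : Type*} [CommMonoid M]

/-- Convert a product over ordered pairs in `Fin n × Fin n` to a nested range product. -/
@[to_additive]
lemma prod_pairs (n : ℕ) (F : ℕ → ℕ → M) :
    ∏ p ∈ (Finset.univ : Finset (Fin n × Fin n)).filter (fun p => p.1 < p.2),
      F p.1.val p.2.val
      = ∏ j ∈ range n, ∏ i ∈ range j, F i j := by
  rw [← Finset.prod_sigma (range n) (fun j => range j) (fun x => F x.2 x.1)]
  apply Finset.prod_bij (fun (p : Fin n × Fin n) _ => (⟨p.2.val, p.1.val⟩ : Σ _ : ℕ, ℕ))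
  · intro p hp
    have hlt : p.1 < p.2 := (Finset.mem_filter.1 hp).2
    exact Finset.mem_sigma.2 ⟨Finset.mem_range.2 p.2.isLt, Finset.mem_range.2 hlt⟩
  · intro p hp p' hp' hpp
    have e1 : p.2.val = p'.2.val := congrArg Sigma.fst hpp
    have e2 : p.1.val = p'.1.val := congrArg (fun x : Σ _ : ℕ, ℕ => x.2) hpp
    exact Prod.ext (Fin.ext e2) (Fin.ext e1)
  · intro x hx
    have hm := Finset.mem_sigma.1 hx
    have h1 := Finset.mem_range.1 hm.1
    have h2 := Finset.mem_range.1 hm.2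
    refine ⟨(⟨x.2, by omega⟩, ⟨x.1, by omega⟩), ?_, rfl⟩
    simp only [Finset.mem_filter, Finset.mem_univ, true_and]
    exact h2
  · intro p hp
    rfl

end pairs

lemma pairsum (f : ℕ → ℕ) (n : ℕ) :
    (∑ j ∈ range n, ∑ i ∈ range j, (f i + f j)) + ∑ j ∈ range n, f j
      = ∑ j ∈ range n, n * f j := by
  induction n with
  | zero => simp
  | succ n IH =>
    rw [Finset.sum_range_succ, Finset.sum_range_succ f n,
        Finset.sum_range_succ (fun j => (n+1) * f j) n]
    have h1 : ∑ i ∈ range n, (f i + f n) = (∑ i ∈ range n, f i) + n * f n := by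
      rw [Finset.sum_add_distrib, Finset.sum_const, Finset.card_range, smul_eq_mul, mul_comm]
    have h2 : ∑ j ∈ range n, (n+1) * f j = (∑ j ∈ range n, n * f j) + ∑ j ∈ range n, f j := by
      rw [← Finset.sum_add_distrib]
      exact Finset.sum_congr rfl fun j _ => by ring
    have h3 : (n + 1) * f n = n * f n + f n := by ring
    omega

/-- `csum a k = a_0 + ⋯ + a_{k-1}`. -/
def csum (a : ℕ → ℕ) (k : ℕ) : ℕ := ∑ j ∈ range k, a j

lemma eval_identity' (a : ℕ → ℕ) (n : ℕ) :
    (∏ j ∈ range n, ∏ i ∈ range j,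
        ((∏ l ∈ range (a i), (q ^ csum a j - q ^ (l + csum a i))) *
         (∏ l ∈ range (a j), (q ^ csum a i - q ^ (l + 1 + csum a j))))) *
      ∏ i ∈ range n, qFac (a i)
    = qFac (csum a n) *
      ∏ i ∈ range n, ∏ t ∈ (range (csum a n - a i + 1)).erase (csum a i),
        (q ^ csum a i - q ^ t) :=
  eval_identity a n

theorem qDyson (n : ℕ) (a : Fin n → ℕ) :
    MvPolynomial.coeff (Finsupp.equivFunOnFinite.symm fun k => (∑ j, a j) - a k)
        (dysonPoly n a) =
      qFac (∑ j, a j) / ∏ i, qFac (a i) := by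
  classical
  set σ := ∑ j, a j with hσdef
  set a' : ℕ → ℕ := fun k => if h : k < n then a ⟨k, h⟩ else 0 with ha'def
  have ha'lt : ∀ i (h : i < n), a' i = a ⟨i, h⟩ := by
    intro i h
    simp only [ha'def]
    rw [dif_pos h]
  have ha'eq : ∀ k : Fin n, a' k.val = a k := by
    intro k
    rw [ha'lt k.val k.isLt]
  have hσ' : ∑ k ∈ range n, a' k = σ := by
    rw [hσdef, ← Fin.sum_univ_eq_sum_range a' n]
    exact Finset.sum_congr rfl fun k _ => ha'eq k
  have hak : ∀ k : Fin n, csum a' k.val + a k ≤ σ := by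
    intro k
    have h1 : csum a' k.val + a' k.val = ∑ j ∈ range (k.val+1), a' j :=
      (Finset.sum_range_succ a' k.val).symm
    have h2 : ∑ j ∈ range (k.val+1), a' j ≤ ∑ j ∈ range n, a' j :=
      Finset.sum_le_sum_of_subset (Finset.range_subset_range.2 k.isLt)
    rw [ha'eq k] at h1
    omega
  have haσ : ∀ k : Fin n, a k ≤ σ := fun k => by have := hak k; omega
  -- the grid
  set A : Fin n → Finset (RatFunc ℚ) :=
    fun k => (range (σ - a k + 1)).image (fun t => q ^ t) with hAdef
  have hAcard : ∀ k, (A k).card = (σ - a k) + 1 := by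
    intro k
    simp only [hAdef]
    rw [Finset.card_image_of_injective _ q_pow_inj, Finset.card_range]
  -- degree bound
  have hdeg : (dysonPoly n a).totalDegree ≤ ∑ k, (σ - a k) := by
    unfold dysonPoly
    refine le_trans (MvPolynomial.totalDegree_finset_prod _ _) ?_
    have hpair : ∀ p ∈ (Finset.univ : Finset (Fin n × Fin n)).filter (fun p => p.1 < p.2),
        ((∏ l ∈ Finset.range (a p.1), (X p.2 - C (q ^ l) * X p.1)) *
         (∏ l ∈ Finset.range (a p.2), (X p.1 - C (q ^ (l + 1)) * X p.2))).totalDegree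
          ≤ a p.1 + a p.2 := by
      intro p _
      refine le_trans (MvPolynomial.totalDegree_mul _ _) (add_le_add ?_ ?_) <;>
      · refine le_trans (MvPolynomial.totalDegree_finset_prod _ _) ?_
        refine le_trans (Finset.sum_le_sum (g := fun _ => 1) ?_) ?_
        · intro l _
          refine le_trans (MvPolynomial.totalDegree_sub _ _) (max_le ?_ ?_)
          · rw [MvPolynomial.totalDegree_X]
          · refine le_trans (MvPolynomial.totalDegree_mul _ _) ?_
            rw [MvPolynomial.totalDegree_C, MvPolynomial.totalDegree_X]
        · rw [Finset.sum_const, Finset.card_range, smul_eq_mul, mul_one]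
    refine le_trans (Finset.sum_le_sum hpair) ?_
    -- arithmetic
    have hsum1 : ∑ p ∈ (Finset.univ : Finset (Fin n × Fin n)).filter (fun p => p.1 < p.2),
        (a p.1 + a p.2) = ∑ j ∈ range n, ∑ i ∈ range j, (a' i + a' j) := by
      rw [← sum_pairs n (fun i j => a' i + a' j)]
      exact Finset.sum_congr rfl fun p _ => by rw [ha'eq p.1, ha'eq p.2]
    have hp2 := pairsum a' n
    have hmul : ∑ j ∈ range n, n * a' j = n * σ := by rw [← Finset.mul_sum, hσ']
    have htar : (∑ k : Fin n, (σ - a k)) + σ = n * σ := by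
      have e1 : (∑ k : Fin n, (σ - a k)) + ∑ k : Fin n, a k = ∑ k : Fin n, ((σ - a k) + a k) :=
        (Finset.sum_add_distrib).symm
      have e2 : ∑ k : Fin n, ((σ - a k) + a k) = ∑ k : Fin n, σ :=
        Finset.sum_congr rfl fun k _ => by have := haσ k; omega
      have e3 : ∑ k : Fin n, σ = n * σ := by
        rw [Finset.sum_const, Finset.card_univ, Fintype.card_fin, smul_eq_mul]
      rw [← hσdef] at e1
      omega
    rw [hsum1]
    omega
  have hform := coeff_eq_sum_grid (fun k => σ - a k) A hAcard (dysonPoly n a) hdeg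
  -- general evaluation of the Dyson polynomial
  have hevalgen : ∀ w : Fin n → RatFunc ℚ, MvPolynomial.eval w (dysonPoly n a)
      = ∏ p ∈ (Finset.univ : Finset (Fin n × Fin n)).filter (fun p => p.1 < p.2),
          ((∏ l ∈ range (a p.1), (w p.2 - q ^ l * w p.1)) *
           (∏ l ∈ range (a p.2), (w p.1 - q ^ (l + 1) * w p.2))) := by
    intro w
    unfold dysonPoly
    rw [map_prod]
    apply Finset.prod_congr rfl
    intro p _
    rw [map_mul, map_prod, map_prod]
    congr 1 <;>
    · exact Finset.prod_congr rfl fun l _ => by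
        simp only [map_sub, map_mul, MvPolynomial.eval_X, MvPolynomial.eval_C]
  set z₀ : Fin n → RatFunc ℚ := fun k => q ^ (csum a' k.val) with hz₀def
  have hmem : z₀ ∈ Fintype.piFinset A := by
    rw [Fintype.mem_piFinset]
    intro k
    simp only [hAdef, hz₀def]
    refine Finset.mem_image.2 ⟨csum a' k.val, Finset.mem_range.2 ?_, rfl⟩
    have := hak k
    omega
  have hzero : ∀ z ∈ Fintype.piFinset A, z ≠ z₀ →
      MvPolynomial.eval z (dysonPoly n a) / ∏ i, ∏ y ∈ (A i).erase (z i), (z i - y) = 0 := by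
    intro z hz hne
    suffices h : MvPolynomial.eval z (dysonPoly n a) = 0 by rw [h, zero_div]
    by_contra hne0
    have hex : ∀ k : Fin n, ∃ m, m < σ - a k + 1 ∧ z k = q ^ m := by
      intro k
      have hzk := Fintype.mem_piFinset.1 hz k
      simp only [hAdef] at hzk
      obtain ⟨m, hm, hzke⟩ := Finset.mem_image.1 hzk
      exact ⟨m, Finset.mem_range.1 hm, hzke.symm⟩
    choose t ht1 ht2 using hex
    rw [hevalgen] at hne0
    have hfac : ∀ (i j : Fin n), i < j →
        (∀ l, l < a i → t j ≠ l + t i) ∧ (∀ l, l < a j → t i ≠ l + 1 + t j) := by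
      intro i j hij
      have hp : ((i, j) : Fin n × Fin n) ∈
          (Finset.univ : Finset (Fin n × Fin n)).filter (fun p => p.1 < p.2) := by
        simp [hij]
      constructor
      · intro l hl heq
        apply hne0
        apply Finset.prod_eq_zero hp
        apply mul_eq_zero_of_left
        apply Finset.prod_eq_zero (Finset.mem_range.2 hl)
        rw [ht2 i, ht2 j, ← pow_add, heq, sub_self]
      · intro l hl heq
        apply hne0
        apply Finset.prod_eq_zero hp
        apply mul_eq_zero_of_right
        apply Finset.prod_eq_zero (Finset.mem_range.2 hl)
        rw [ht2 i, ht2 j, ← pow_add, heq, sub_self]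
    set t' : ℕ → ℕ := fun k => if h : k < n then t ⟨k, h⟩ else 0 with ht'def
    have ht'lt : ∀ i (h : i < n), t' i = t ⟨i, h⟩ := by
      intro i h
      simp only [ht'def]
      rw [dif_pos h]
    have H1 : ∀ i, i < n → t' i + a' i ≤ ∑ j ∈ range n, a' j := by
      intro i hi
      rw [ht'lt i hi, ha'lt i hi, hσ']
      have h1 := ht1 ⟨i, hi⟩
      have h2 := haσ ⟨i, hi⟩
      omega
    have H2 : ∀ i j, i < j → j < n → (t' i + a' i ≤ t' j ∨ t' j + a' j + 1 ≤ t' i) := by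
      intro i j hij hj
      have hi : i < n := lt_trans hij hj
      rw [ht'lt i hi, ht'lt j hj, ha'lt i hi, ha'lt j hj]
      have hf := hfac ⟨i, hi⟩ ⟨j, hj⟩ (by exact hij)
      rcases le_or_gt (t ⟨i, hi⟩ + a ⟨i, hi⟩) (t ⟨j, hj⟩) with h | h
      · exact Or.inl h
      · right
        by_contra hcon
        push_neg at hcon
        rcases le_or_gt (t ⟨i, hi⟩) (t ⟨j, hj⟩) with h2 | h2
        · have := hf.1 (t ⟨j, hj⟩ - t ⟨i, hi⟩) (by omega)
          omega
        · have := hf.2 (t ⟨i, hi⟩ - t ⟨j, hj⟩ - 1) (by omega)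
          omega
    have hcomb := comb_lemma n a' t' H1 H2
    apply hne
    funext k
    have hk := hcomb k.val k.isLt
    rw [ht'lt k.val k.isLt] at hk
    simp only [Fin.eta] at hk
    rw [ht2 k, hz₀def, hk]
    rfl
  rw [hform, Finset.sum_eq_single_of_mem z₀ hmem hzero]
  -- final computation
  have heval0 : MvPolynomial.eval z₀ (dysonPoly n a)
      = ∏ j ∈ range n, ∏ i ∈ range j,
          ((∏ l ∈ range (a' i), (q ^ csum a' j - q ^ (l + csum a' i))) *
           (∏ l ∈ range (a' j), (q ^ csum a' i - q ^ (l + 1 + csum a' j)))) := by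
    rw [hevalgen z₀]
    rw [← prod_pairs n (fun i j =>
      (∏ l ∈ range (a' i), (q ^ csum a' j - q ^ (l + csum a' i))) *
      (∏ l ∈ range (a' j), (q ^ csum a' i - q ^ (l + 1 + csum a' j))))]
    apply Finset.prod_congr rfl
    intro p _
    simp only [hz₀def]
    rw [ha'eq p.1, ha'eq p.2]
    congr 1
    · exact Finset.prod_congr rfl fun l _ => by rw [← pow_add]
    · exact Finset.prod_congr rfl fun l _ => by rw [← pow_add]
  have hD : (∏ i, ∏ y ∈ (A i).erase (z₀ i), (z₀ i - y))
      = ∏ i ∈ range n, ∏ s ∈ (range (csum a' n - a' i + 1)).erase (csum a' i),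
          (q ^ csum a' i - q ^ s) := by
    rw [← Fin.prod_univ_eq_prod_range (fun iv =>
      ∏ s ∈ (range (csum a' n - a' iv + 1)).erase (csum a' iv), (q ^ csum a' iv - q ^ s)) n]
    apply Finset.prod_congr rfl
    intro i _
    simp only [hAdef, hz₀def]
    rw [← Finset.image_erase q_pow_inj]
    rw [Finset.prod_image (fun x _ y _ h => q_pow_inj h)]
    rw [ha'eq i]
    rw [show csum a' n = σ from hσ']
  have hQ : (∏ i ∈ range n, qFac (a' i)) = ∏ i, qFac (a i) := by
    rw [← Fin.prod_univ_eq_prod_range (fun iv => qFac (a' iv)) n]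
    exact Finset.prod_congr rfl fun k _ => by rw [ha'eq k]
  have hQne : (∏ i, qFac (a i)) ≠ 0 :=
    Finset.prod_ne_zero_iff.2 fun i _ => qFac_ne_zero _
  have hDne : (∏ i ∈ range n, ∏ s ∈ (range (csum a' n - a' i + 1)).erase (csum a' i),
      (q ^ csum a' i - q ^ s)) ≠ 0 := by
    refine Finset.prod_ne_zero_iff.2 fun i _ => Finset.prod_ne_zero_iff.2 fun s hs => ?_
    exact q_pow_sub_ne_zero (fun h => (Finset.mem_erase.1 hs).1 h.symm)
  have key := eval_identity' a' n
  rw [hQ] at key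
  rw [heval0, hD, div_eq_div_iff hDne hQne]
  rw [show csum a' n = σ from hσ'] at key ⊢
  linear_combination key
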